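/- In the two-agent, two-state log-utility belief reporting game with the symmetric linear opinion pool, with true beliefs p_a ≤ p_b, the aggregate belief at any pure Nash equilibrium equals the median of {p_a, p_b, 1/2}. -/

import Mathlib

lemma real_mono (p x y : ℝ) (hx : 0 < x) (hxy : x < y) (hyp : y ≤ p) (hp1 : p ≤ 1) :
    p * Real.log x + (1-p) * Real.log (1-x) < p * Real.log y + (1-p) * Real.log (1-y) := by
  rcases eq_or_lt_of_le hp1 with hp | hp
  · subst hp
    simp only [sub_self, zero_mul, add_zero, one_mul]
    exact Real.log_lt_log hx hxy
  · have hy1 : y < 1 := lt_of_le_of_lt hyp hp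
    have key : StrictMonoOn (fun t => p * Real.log t + (1-p) * Real.log (1-t)) (Set.Icc x y) := by
      apply strictMonoOn_of_deriv_pos (convex_Icc x y)
      · apply ContinuousOn.add
        · exact (Real.continuousOn_log.mono (by
            intro t ht
            simp only [Set.mem_compl_iff, Set.mem_singleton_iff]
            exact ne_of_gt (lt_of_lt_of_le hx ht.1))).const_smul p |>.congr (by intro t ht; simp [smul_eq_mul])
        · apply ContinuousOn.mul continuousOn_const
          apply (Real.continuousOn_log.comp (continuousOn_const.sub continuousOn_id))
          intro t ht
          simp only [Set.mem_preimage, Set.mem_compl_iff, Set.mem_singleton_iff]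
          have : t ≤ y := ht.2
          intro h
          simp only [Pi.sub_apply, id_eq] at h
          linarith
      · intro t ht
        rw [interior_Icc] at ht
        have ht0 : 0 < t := lt_trans hx ht.1
        have ht1 : t < 1 := lt_of_lt_of_le (lt_of_lt_of_le ht.2 hyp) hp1
        have h1 : HasDerivAt (fun t => p * Real.log t) (p * t⁻¹) t :=
          (Real.hasDerivAt_log ht0.ne').const_mul p
        have h2 : HasDerivAt (fun t : ℝ => 1 - t) (-1) t := (hasDerivAt_id t).const_sub 1
        have h3 : HasDerivAt (fun t : ℝ => Real.log (1 - t)) ((1-t)⁻¹ * -1) t :=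
          (Real.hasDerivAt_log (by linarith : (1:ℝ) - t ≠ 0)).comp t h2
        have h4 := (h1.add (h3.const_mul (1-p)))
        rw [HasDerivAt.deriv (f := fun t => p * Real.log t + (1 - p) * Real.log (1 - t)) h4]
        have htp : t < p := lt_of_lt_of_le ht.2 hyp
        have h1t : 0 < 1 - t := by linarith
        rw [show p * t⁻¹ + (1-p) * ((1-t)⁻¹ * -1) = p / t - (1-p)/(1-t) by
          field_simp; ring]
        rw [sub_pos, div_lt_div_iff₀ h1t ht0]
        nlinarith
    have := key (Set.left_mem_Icc.mpr hxy.le) (Set.right_mem_Icc.mpr hxy.le) hxy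
    exact this

/-- Two-state log payoff with convention `0 · ln 0 = 0`. -/
noncomputable def pay2 (p x : ℝ) : EReal :=
  (if x = 0 ∧ p ≠ 0 then (⊥ : EReal) else ((p * Real.log x : ℝ) : EReal)) +
  (if x = 1 ∧ p ≠ 1 then (⊥ : EReal) else (((1 - p) * Real.log (1 - x) : ℝ) : EReal))

/-- with true beliefs `pa ≤ pb`, the aggregate belief at any pure
Nash equilibrium of the two-agent, two-state log-utility reporting game equals
the median of `{pa, pb, 1/2}`, which (given `pa ≤ pb`) is `max pa (min pb (1/2))`. -/

lemma pay2_coe (p x : ℝ) (h0 : ¬(x = 0 ∧ p ≠ 0)) (h1 : ¬(x = 1 ∧ p ≠ 1)) :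
    pay2 p x = ((p * Real.log x + (1 - p) * Real.log (1 - x) : ℝ) : EReal) := by
  rw [pay2, if_neg h0, if_neg h1, ← EReal.coe_add]

lemma pay2_swap (p x : ℝ) : pay2 (1 - p) (1 - x) = pay2 p x := by
  have e1 : ((1:ℝ) - x = 1 ∧ (1:ℝ) - p ≠ 1) = (x = 0 ∧ p ≠ 0) := by
    apply propext; constructor <;> rintro ⟨a, b⟩
    · exact ⟨by linarith, fun h => b (by rw [h]; ring)⟩
    · exact ⟨by linarith, fun h => b (by linarith)⟩
  have e2 : ((1:ℝ) - x = 0 ∧ (1:ℝ) - p ≠ 0) = (x = 1 ∧ p ≠ 1) := by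
    apply propext; constructor <;> rintro ⟨a, b⟩
    · exact ⟨by linarith, fun h => b (by rw [h]; ring)⟩
    · exact ⟨by linarith, fun h => b (by linarith)⟩
  unfold pay2
  rw [add_comm]; simp only [sub_sub_cancel, e1, e2]

lemma pay2_mono_left (p x y : ℝ) (hx : 0 ≤ x) (hxy : x < y) (hyp : y ≤ p) (hp1 : p ≤ 1) :
    pay2 p x < pay2 p y := by
  have hy0 : 0 < y := lt_of_le_of_lt hx hxy
  have hp0 : 0 < p := lt_of_lt_of_le hy0 hyp
  have hy1 : ¬(y = 1 ∧ p ≠ 1) := fun ⟨h1, h2⟩ => h2 (le_antisymm hp1 (h1 ▸ hyp))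
  have hY := pay2_coe p y (fun h => hy0.ne' h.1) hy1
  rcases eq_or_lt_of_le hx with hx0 | hx0
  · rw [pay2, if_pos ⟨hx0.symm, hp0.ne'⟩, EReal.bot_add, hY]
    exact EReal.bot_lt_coe _
  · have hx1 : ¬(x = 1 ∧ p ≠ 1) := fun ⟨h1, _⟩ => by
      have : x < 1 := lt_of_lt_of_le hxy (le_trans hyp hp1); exact this.ne h1
    rw [pay2_coe p x (fun h => hx0.ne' h.1) hx1, hY, EReal.coe_lt_coe_iff]
    exact real_mono p x y hx0 hxy hyp hp1

lemma pay2_mono_right (p x y : ℝ) (hp : 0 ≤ p) (hpy : p ≤ y) (hyx : y < x) (hx1 : x ≤ 1) :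
    pay2 p x < pay2 p y := by
  rw [← pay2_swap p x, ← pay2_swap p y]
  exact pay2_mono_left (1 - p) (1 - x) (1 - y) (by linarith) (by linarith) (by linarith) (by linarith)

theorem stmt2 (pa pb ρa ρb : ℝ)
    (hpa : pa ∈ Set.Icc (0:ℝ) 1) (hpb : pb ∈ Set.Icc (0:ℝ) 1) (hab : pa ≤ pb)
    (hρa : ρa ∈ Set.Icc (0:ℝ) 1) (hρb : ρb ∈ Set.Icc (0:ℝ) 1)
    (hNa : IsMaxOn (fun r => pay2 pa ((r + ρb) / 2)) (Set.Icc (0:ℝ) 1) ρa)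
    (hNb : IsMaxOn (fun r => pay2 pb ((ρa + r) / 2)) (Set.Icc (0:ℝ) 1) ρb) :
    (ρa + ρb) / 2 = max pa (min pb (1 / 2)) := by
  obtain ⟨ha0, ha1⟩ := hρa
  obtain ⟨hb0, hb1⟩ := hρb
  -- A1 : aggregate below pa forces ρa = 1
  have A1 : (ρa + ρb) / 2 < pa → ρa = 1 := by
    intro h
    by_contra hne
    have h1 : ρa < 1 := lt_of_le_of_ne ha1 hne
    set x' := min pa ((1 + ρb) / 2) with hx'
    have hlt : (ρa + ρb) / 2 < x' := lt_min h (by linarith)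
    have hx'le : x' ≤ pa := min_le_left _ _
    have hx'le2 : x' ≤ (1 + ρb) / 2 := min_le_right _ _
    have hmem : 2 * x' - ρb ∈ Set.Icc (0:ℝ) 1 := ⟨by linarith, by linarith⟩
    have hmax := isMaxOn_iff.mp hNa _ hmem
    rw [show (2 * x' - ρb + ρb) / 2 = x' by ring] at hmax
    have := pay2_mono_left pa ((ρa + ρb) / 2) x' (by linarith) hlt hx'le hpa.2
    exact absurd hmax this.not_ge
  -- A2 : aggregate above pa forces ρa = 0
  have A2 : pa < (ρa + ρb) / 2 → ρa = 0 := by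
    intro h
    by_contra hne
    have h1 : 0 < ρa := lt_of_le_of_ne ha0 (Ne.symm hne)
    set x' := max pa (ρb / 2) with hx'
    have hlt : x' < (ρa + ρb) / 2 := max_lt h (by linarith)
    have hx'ge : pa ≤ x' := le_max_left _ _
    have hx'ge2 : ρb / 2 ≤ x' := le_max_right _ _
    have hmem : 2 * x' - ρb ∈ Set.Icc (0:ℝ) 1 := ⟨by linarith, by linarith⟩
    have hmax := isMaxOn_iff.mp hNa _ hmem
    rw [show (2 * x' - ρb + ρb) / 2 = x' by ring] at hmax
    have := pay2_mono_right pa ((ρa + ρb) / 2) x' hpa.1 hx'ge hlt (by linarith)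
    exact absurd hmax this.not_ge
  -- B1 : aggregate below pb forces ρb = 1
  have B1 : (ρa + ρb) / 2 < pb → ρb = 1 := by
    intro h
    by_contra hne
    have h1 : ρb < 1 := lt_of_le_of_ne hb1 hne
    set x' := min pb ((ρa + 1) / 2) with hx'
    have hlt : (ρa + ρb) / 2 < x' := lt_min h (by linarith)
    have hx'le : x' ≤ pb := min_le_left _ _
    have hx'le2 : x' ≤ (ρa + 1) / 2 := min_le_right _ _
    have hmem : 2 * x' - ρa ∈ Set.Icc (0:ℝ) 1 := ⟨by linarith, by linarith⟩
    have hmax := isMaxOn_iff.mp hNb _ hmem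
    rw [show (ρa + (2 * x' - ρa)) / 2 = x' by ring] at hmax
    have := pay2_mono_left pb ((ρa + ρb) / 2) x' (by linarith) hlt hx'le hpb.2
    exact absurd hmax this.not_ge
  -- B2 : aggregate above pb forces ρb = 0
  have B2 : pb < (ρa + ρb) / 2 → ρb = 0 := by
    intro h
    by_contra hne
    have h1 : 0 < ρb := lt_of_le_of_ne hb0 (Ne.symm hne)
    set x' := max pb (ρa / 2) with hx'
    have hlt : x' < (ρa + ρb) / 2 := max_lt h (by linarith)
    have hx'ge : pb ≤ x' := le_max_left _ _
    have hx'ge2 : ρa / 2 ≤ x' := le_max_right _ _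
    have hmem : 2 * x' - ρa ∈ Set.Icc (0:ℝ) 1 := ⟨by linarith, by linarith⟩
    have hmax := isMaxOn_iff.mp hNb _ hmem
    rw [show (ρa + (2 * x' - ρa)) / 2 = x' by ring] at hmax
    have := pay2_mono_right pb ((ρa + ρb) / 2) x' hpb.1 hx'ge hlt (by linarith)
    exact absurd hmax this.not_ge
  -- the aggregate lies between pa and pb
  have hlow : pa ≤ (ρa + ρb) / 2 := by
    by_contra h
    push_neg at h
    have e1 := A1 h
    have e2 := B1 (lt_of_lt_of_le h hab)
    rw [e1, e2] at h
    norm_num at h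
    linarith [hpa.2]
  have hhigh : (ρa + ρb) / 2 ≤ pb := by
    by_contra h
    push_neg at h
    have e1 := A2 (lt_of_le_of_lt hab h)
    have e2 := B2 h
    rw [e1, e2] at h
    norm_num at h
    linarith [hpb.1]
  rcases lt_trichotomy ((ρa + ρb) / 2) (max pa (min pb (1/2))) with h | h | h
  · exfalso
    have hq : (ρa + ρb) / 2 < min pb (1/2) := by
      rcases max_cases pa (min pb (1/2)) with ⟨he, hle⟩ | ⟨he, _⟩
      · rw [he] at h; linarith
      · rwa [he] at h
    have hr := B1 (lt_of_lt_of_le hq (min_le_left _ _))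
    have : (ρa + ρb) / 2 < 1/2 := lt_of_lt_of_le hq (min_le_right _ _)
    rw [hr] at this
    linarith
  · exact h
  · exfalso
    have hr := A2 (lt_of_le_of_lt (le_max_left _ _) h)
    have hhalf : (ρa + ρb) / 2 ≤ 1/2 := by rw [hr]; linarith
    have hq : min pb (1/2) < (ρa + ρb) / 2 := lt_of_le_of_lt (le_max_right _ _) h
    rcases le_total pb (1/2) with h' | h'
    · rw [min_eq_left h'] at hq; linarith
    · rw [min_eq_right h'] at hq; linarith
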